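/- If a sequence of value-distribution/policy pairs (Z_k, π_k) is generated by repeatedly applying the greedy policy improvement of the HR optimality operator, then the sequence of risk values β[Z^{π_k}(h, π_k(h))] is nondecreasing in k for every history h, and on a finite history and action space it stabilizes after finitely many steps at a policy satisfying the risk-sensitive HR optimality equation. -/

import Mathlib

/-- greedy HR policy iteration is monotone and stabilizes.  Episodic
deterministic-transition MDP with finite history space `H` and finite action space
`A`; `Vβ π h a = β[Z^π(h,a)]` is the exact risk evaluation of the deterministic
history-based policy `π`, satisfying the unfolding identity (`hunfold`) and
policy-independence at terminal histories (`hterm`).  The sequence `πseq` is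
generated by greedy improvement: `πseq (k+1) h ∈ argmax_a β[Z^{πseq k}(h,a)]`
(hypothesis `hgreedy`).  Then the risk values `β[Z^{π_k}(h, π_k(h))]` are
nondecreasing in `k` for every history `h`, and after finitely many steps they
stabilize at a policy satisfying the risk-sensitive HR optimality equation, i.e. a
policy greedy with respect to its own risk values. -/
theorem hr_policy_iteration_monotone_and_stabilizes
    {H A : Type} [Fintype H] [Fintype A] [Nonempty A]
    (T : ℕ) (len : H → ℕ) (hlen : ∀ h, len h ≤ T)
    (nextH : H → A → H)
    (hnext : ∀ h a, len h < T → len (nextH h a) = len h + 1)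
    (Vβ : (H → A) → H → A → ℝ)
    (hunfold : ∀ (π : H → A) (h : H) (a : A), len h < T →
      Vβ π h a = Vβ π (nextH h a) (π (nextH h a)))
    (hterm : ∀ (π π' : H → A) (h : H) (a : A), len h = T → Vβ π h a = Vβ π' h a)
    (πseq : ℕ → H → A)
    (hgreedy : ∀ k h a, Vβ (πseq k) h a ≤ Vβ (πseq k) h (πseq (k+1) h)) :
    (∀ h, Monotone fun k => Vβ (πseq k) h (πseq k h)) ∧
    ∃ K : ℕ, (∀ k, K ≤ k → ∀ h,
        Vβ (πseq k) h (πseq k h) = Vβ (πseq K) h (πseq K h)) ∧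
      ∀ h a, Vβ (πseq K) h a ≤ Vβ (πseq K) h (πseq K h) := by
  classical
  -- Policy improvement: Vβ (πseq k) h a ≤ Vβ (πseq (k+1)) h a for all h, a.
  have improve : ∀ (n : ℕ) (k : ℕ) (h : H), T - len h ≤ n → ∀ a,
      Vβ (πseq k) h a ≤ Vβ (πseq (k+1)) h a := by
    intro n
    induction n with
    | zero =>
      intro k h hn a
      have hT : len h = T := le_antisymm (hlen h) (by omega)
      exact le_of_eq (hterm _ _ _ _ hT)
    | succ n ih =>
      intro k h hn a
      rcases lt_or_eq_of_le (hlen h) with hlt | hT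
      · have h' := nextH h a
        have hlen' : len (nextH h a) = len h + 1 := hnext h a hlt
        have hnn : T - len (nextH h a) ≤ n := by omega
        rw [hunfold (πseq k) h a hlt, hunfold (πseq (k+1)) h a hlt]
        calc Vβ (πseq k) (nextH h a) (πseq k (nextH h a))
            ≤ Vβ (πseq k) (nextH h a) (πseq (k+1) (nextH h a)) := hgreedy k _ _
          _ ≤ Vβ (πseq (k+1)) (nextH h a) (πseq (k+1) (nextH h a)) := ih k _ hnn _
      · exact le_of_eq (hterm _ _ _ _ hT)
  have improve' : ∀ (k : ℕ) (h : H) (a : A),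
      Vβ (πseq k) h a ≤ Vβ (πseq (k+1)) h a := fun k h a =>
    improve (T - len h) k h le_rfl a
  -- value of each step
  set f : ℕ → H → ℝ := fun k h => Vβ (πseq k) h (πseq k h) with hf
  have step : ∀ k h, f k h ≤ f (k+1) h := by
    intro k h
    calc f k h ≤ Vβ (πseq k) h (πseq (k+1) h) := hgreedy k h _
      _ ≤ Vβ (πseq (k+1)) h (πseq (k+1) h) := improve' k h _
  have mono : ∀ h, Monotone fun k => f k h := fun h =>
    monotone_nat_of_le_succ (fun k => step k h)
  refine ⟨mono, ?_⟩
  -- finitely many possible values: range of Vβ over all (policy, h, a)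
  have hrange : ∀ h, (Set.range fun k => f k h).Finite := by
    intro h
    have : (Set.range fun k => f k h) ⊆
        Set.range (fun p : (H → A) × A => Vβ p.1 h p.2) := by
      rintro x ⟨k, rfl⟩
      exact ⟨(πseq k, πseq k h), rfl⟩
    exact (Set.finite_range _).subset this
  -- each coordinate stabilizes
  have stab : ∀ h, ∃ K, ∀ k, K ≤ k → f k h = f K h := by
    intro h
    obtain ⟨m, hm, hmax⟩ :=
      (hrange h).exists_maximalFor id _ ⟨f 0 h, 0, rfl⟩
    obtain ⟨K, hK⟩ := hm
    refine ⟨K, fun k hk => ?_⟩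
    have h1 : id m ≤ id (f k h) := by simpa [← hK] using mono h hk
    have h2 : id m = id (f k h) := le_antisymm h1 (@hmax (f k h) ⟨k, rfl⟩ h1)
    simp only [id] at h2
    rw [← h2]; exact hK.symm
  choose Kh hKh using stab
  set K : ℕ := Finset.univ.sup Kh with hKdef
  have hKge : ∀ h, Kh h ≤ K := fun h => Finset.le_sup (Finset.mem_univ h)
  refine ⟨K, ?_, ?_⟩
  · intro k hk h
    show f k h = f K h
    rw [hKh h k (le_trans (hKge h) hk), hKh h K (hKge h)]
  · intro h a
    have h1 : f (K+1) h = f K h := by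
      rw [hKh h (K+1) (le_trans (hKge h) (Nat.le_succ K)),
        hKh h K (hKge h)]
    calc Vβ (πseq K) h a ≤ Vβ (πseq K) h (πseq (K+1) h) := hgreedy K h a
      _ ≤ Vβ (πseq (K+1)) h (πseq (K+1) h) := improve' K h _
      _ = Vβ (πseq K) h (πseq K h) := h1
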